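/- Let R be a commutative ring and let x, y, z, w be invertible elements of R. Then the system of equations x + y = z + w and x⁻¹ + y⁻¹ = z⁻¹ + w⁻¹ holds if and only if the system (z−x)(z−y)(x+y) = 0 and w = x + y − z holds. -/
import Mathlib

/-- in a commutative ring, for invertible `x, y, z, w`, the system
`x + y = z + w`, `x⁻¹ + y⁻¹ = z⁻¹ + w⁻¹` is equivalent to the system
`(z - x)(z - y)(x + y) = 0`, `w = x + y - z`. -/
theorem system_equiv {R : Type*} [CommRing R] (x y z w : R)
    (hx : IsUnit x) (hy : IsUnit y) (hz : IsUnit z) (hw : IsUnit w) :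
    (x + y = z + w ∧
        Ring.inverse x + Ring.inverse y = Ring.inverse z + Ring.inverse w) ↔
      ((z - x) * (z - y) * (x + y) = 0 ∧ w = x + y - z) := by
  have hix : x * Ring.inverse x = 1 := Ring.mul_inverse_cancel x hx
  have hiy : y * Ring.inverse y = 1 := Ring.mul_inverse_cancel y hy
  have hiz : z * Ring.inverse z = 1 := Ring.mul_inverse_cancel z hz
  have hiw : w * Ring.inverse w = 1 := Ring.mul_inverse_cancel w hw
  constructor
  · rintro ⟨h, h2⟩
    have key : z * w * (x + y) = x * y * (z + w) := by
      linear_combination x*y*z*w*h2 - y*z*w*hix - x*z*w*hiy + x*y*w*hiz + x*y*z*hiw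
    have hw' : w = x + y - z := by linear_combination -h
    refine ⟨?_, hw'⟩
    subst hw'
    linear_combination -key
  · rintro ⟨h0, hw'⟩
    subst hw'
    refine ⟨by ring, ?_⟩
    have hu : IsUnit (x * y * z * (x + y - z)) := ((hx.mul hy).mul hz).mul hw
    refine hu.mul_left_cancel ?_
    linear_combination y*z*(x+y-z)*hix + x*z*(x+y-z)*hiy - x*y*(x+y-z)*hiz - x*y*z*hiw - h0
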